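/- arXiv:1803.01075 — 3 statements merged into one kernel-verified Lean document; each statement's English description precedes it below -/
import Mathlib

section
/- Let Q be an inverse quantal frame and X a Q-sheaf. Then every Hilbert section s of X is regular, i.e., ⟨s,s⟩s = s. -/
/-- A unital involutive quantale: a complete lattice with an associative
multiplication preserving arbitrary joins in each variable, a unit `e`, and a
join-preserving involution. -/
structure Quantale' (Q : Type*) [CompleteLattice Q] where
  mul : Q → Q → Q
  e : Q
  star : Q → Q
  mul_assoc : ∀ a b c, mul (mul a b) c = mul a (mul b c)
  sSup_mul : ∀ (S : Set Q) (b : Q), mul (sSup S) b = ⨆ a ∈ S, mul a b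
  mul_sSup : ∀ (a : Q) (S : Set Q), mul a (sSup S) = ⨆ b ∈ S, mul a b
  e_mul : ∀ a, mul e a = a
  mul_e : ∀ a, mul a e = a
  star_star : ∀ a, star (star a) = a
  star_mul : ∀ a b, star (mul a b) = mul (star b) (star a)
  star_sSup : ∀ S : Set Q, star (sSup S) = ⨆ a ∈ S, star a

/-- The set of partial units of a quantale. -/
def Quantale'.PU {Q : Type*} [CompleteLattice Q] (Qs : Quantale' Q) : Set Q :=
  {s | Qs.mul s (Qs.star s) ≤ Qs.e ∧ Qs.mul (Qs.star s) s ≤ Qs.e}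

/-- An inverse quantal frame: a unital involutive quantale which is a frame,
has a stable support, and whose partial units join to the top. -/
structure InverseQuantalFrame (Q : Type*) [Order.Frame Q] extends toQuantale : Quantale' Q where
  supp : Q → Q
  supp_le_e : ∀ a, supp a ≤ e
  supp_sSup : ∀ S : Set Q, supp (sSup S) = ⨆ a ∈ S, supp a
  supp_le_mul_star : ∀ a, supp a ≤ mul a (star a)
  le_supp_mul : ∀ a, a ≤ mul (supp a) a
  supp_stable : ∀ b a, b ≤ e → supp (mul b a) = mul b (supp a)
  sSup_PU : sSup {s | mul s (star s) ≤ e ∧ mul (star s) s ≤ e} = ⊤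

/-- A left module over a quantale: a complete lattice with a unital associative
action preserving arbitrary joins in each variable. -/
structure QuantaleModule {Q : Type*} [CompleteLattice Q] (Qs : Quantale' Q)
    (X : Type*) [CompleteLattice X] where
  act : Q → X → X
  act_mul : ∀ a b x, act (Qs.mul a b) x = act a (act b x)
  act_e : ∀ x, act Qs.e x = x
  sSup_act : ∀ (S : Set Q) (x : X), act (sSup S) x = ⨆ a ∈ S, act a x
  act_sSup : ∀ (a : Q) (S : Set X), act a (sSup S) = ⨆ x ∈ S, act a x

/-- A pre-Hilbert module over a quantale. -/
structure PreHilbertModule {Q : Type*} [CompleteLattice Q] (Qs : Quantale' Q)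
    (X : Type*) [CompleteLattice X] extends QuantaleModule Qs X where
  inner : X → X → Q
  inner_act : ∀ a x y, inner (act a x) y = Qs.mul a (inner x y)
  sSup_inner : ∀ (S : Set X) (y : X), inner (sSup S) y = ⨆ x ∈ S, inner x y
  inner_star : ∀ x y, inner x y = Qs.star (inner y x)

namespace PreHilbertModule

variable {Q X : Type*} [CompleteLattice Q] [CompleteLattice X] {Qs : Quantale' Q}

/-- A Hilbert section: `⟨x,s⟩s ≤ x` for all `x`. -/
def IsHilbertSection (H : PreHilbertModule Qs X) (s : X) : Prop :=
  ∀ x, H.act (H.inner x s) s ≤ x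

/-- A regular element: `⟨s,s⟩s = s`. -/
def IsRegularSection (H : PreHilbertModule Qs X) (s : X) : Prop :=
  H.act (H.inner s s) s = s

/-- A Hilbert basis: `x = ⋁_{t ∈ S} ⟨x,t⟩t` for all `x`. -/
def IsHilbertBasis (H : PreHilbertModule Qs X) (S : Set X) : Prop :=
  ∀ x, x = ⨆ t ∈ S, H.act (H.inner x t) t

/-- Non-degeneracy of the inner product. -/
def Nondegenerate (H : PreHilbertModule Qs X) : Prop :=
  ∀ x y, (∀ z, H.inner x z = H.inner y z) → x = y

end PreHilbertModule

/-- A `Q`-locale over an inverse quantal frame: a module which is a frame and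
satisfies the anchor condition. -/
structure QLocale {Q : Type*} [Order.Frame Q] (Qf : InverseQuantalFrame Q)
    (X : Type*) [Order.Frame X] extends QuantaleModule Qf.toQuantale X where
  anchor : ∀ b x, b ≤ Qf.e → act b x = act b ⊤ ⊓ x

/-- A `Q`-sheaf over an inverse quantal frame: a pre-Hilbert module which is a
frame, satisfies the anchor condition, and has a Hilbert basis. -/
structure QSheaf {Q : Type*} [Order.Frame Q] (Qf : InverseQuantalFrame Q)
    (X : Type*) [Order.Frame X] extends PreHilbertModule Qf.toQuantale X where
  anchor : ∀ b x, b ≤ Qf.e → act b x = act b ⊤ ⊓ x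
  hasBasis : ∃ S : Set X, ∀ x, x = ⨆ t ∈ S, act (inner x t) t

namespace QSheaf

variable {Q X : Type*} [Order.Frame Q] [Order.Frame X] {Qf : InverseQuantalFrame Q}

/-- The support `ς_X(x) = ⟨x,x⟩ ∧ e` of a `Q`-sheaf. -/
def sppX (H : QSheaf Qf X) (x : X) : Q := H.inner x x ⊓ Qf.e

/-- A local section: `ς_X(x)s = x` for all `x ≤ s`. -/
def IsLocalSection (H : QSheaf Qf X) (s : X) : Prop :=
  ∀ x ≤ s, H.act (H.sppX x) s = x

/-- A principal section: a local section with `⟨s,s⟩ ≤ e`. -/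
def IsPrincipalSection (H : QSheaf Qf X) (s : X) : Prop :=
  H.IsLocalSection s ∧ H.inner s s ≤ Qf.e

/-- A right local section: `x = s ∧ 1_Q·x` for all `x ≤ s`. -/
def IsRightLocalSection (H : QSheaf Qf X) (s : X) : Prop :=
  ∀ x ≤ s, x = s ⊓ H.act ⊤ x

/-- A local bisection: simultaneously a local section and a right local section. -/
def IsBisection (H : QSheaf Qf X) (s : X) : Prop :=
  H.IsLocalSection s ∧ H.IsRightLocalSection s

end QSheaf

section Aux

variable {Q X : Type*} [CompleteLattice Q] [CompleteLattice X] {Qs : Quantale' Q}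

lemma QuantaleModule.act_mono_left (M : QuantaleModule Qs X) {a b : Q} (h : a ≤ b) (x : X) :
    M.act a x ≤ M.act b x := by
  have h2 : M.act (sSup {a, b}) x = ⨆ c ∈ ({a, b} : Set Q), M.act c x := M.sSup_act _ x
  rw [sSup_pair, sup_eq_right.mpr h] at h2
  rw [h2]
  exact le_iSup₂ (f := fun c _ => M.act c x) a (Set.mem_insert _ _)

lemma QuantaleModule.act_mono_right (M : QuantaleModule Qs X) (a : Q) {x y : X} (h : x ≤ y) :
    M.act a x ≤ M.act a y := by
  have h2 : M.act a (sSup {x, y}) = ⨆ z ∈ ({x, y} : Set X), M.act a z := M.act_sSup a _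
  rw [sSup_pair, sup_eq_right.mpr h] at h2
  rw [h2]
  exact le_iSup₂ (f := fun z _ => M.act a z) x (Set.mem_insert _ _)

lemma PreHilbertModule.inner_mono_left (H : PreHilbertModule Qs X) {x y : X} (h : x ≤ y)
    (z : X) : H.inner x z ≤ H.inner y z := by
  have h2 : H.inner (sSup {x, y}) z = ⨆ w ∈ ({x, y} : Set X), H.inner w z := H.sSup_inner _ z
  rw [sSup_pair, sup_eq_right.mpr h] at h2
  rw [h2]
  exact le_iSup₂ (f := fun w _ => H.inner w z) x (Set.mem_insert _ _)

end Aux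

/-- In a `Q`-sheaf over an inverse quantal frame, every Hilbert
section is regular: `⟨s,s⟩s = s`. -/
theorem stmt1 {Q X : Type*} [Order.Frame Q] [Order.Frame X]
    (Qf : InverseQuantalFrame Q) (H : QSheaf Qf X)
    (s : X) (hs : H.IsHilbertSection s) :
    H.act (H.inner s s) s = s := by
  refine le_antisymm (hs s) ?_
  obtain ⟨S, hS⟩ := H.hasBasis
  have hsum := hS s
  nth_rewrite 1 [hsum]
  refine iSup₂_le fun t ht => ?_
  set a := H.inner s t with ha
  -- the basis term sits below s
  have hterm : H.act a t ≤ s := by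
    have := le_iSup₂ (f := fun t (_ : t ∈ S) => H.act (H.inner s t) t) t ht
    rw [← hS s] at this
    exact this
  -- supp a ≤ ⟨s,s⟩
  have hsupp : Qf.supp a ≤ H.inner s s := by
    refine le_trans (Qf.supp_le_mul_star a) ?_
    have h1 : Qf.star a = H.inner t s := (H.inner_star t s).symm
    have h2 : Qf.mul a (H.inner t s) = H.inner (H.act a t) s := (H.inner_act a t s).symm
    rw [h1, h2]
    exact H.inner_mono_left hterm s
  calc H.act a t
      ≤ H.act (Qf.mul (Qf.supp a) a) t := H.act_mono_left (Qf.le_supp_mul a) t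
    _ = H.act (Qf.supp a) (H.act a t) := by rw [H.act_mul]
    _ ≤ H.act (Qf.supp a) s := H.act_mono_right _ hterm
    _ ≤ H.act (H.inner s s) s := H.act_mono_left hsupp s
end

section
/- Let Q be an inverse quantal frame, X a Q-sheaf, s and t local sections of X, and u ∈ Q_I a partial unit such that ⟨s,t⟩ = u, ς_X(s) = ς_Q(u) and ς_X(t) = ς_Q(u*). Then s and t are principal sections, and both s = ut and t = u*s hold. -/
namespace Stmt12Aux

variable {Q X : Type*} [Order.Frame Q] [Order.Frame X]

section Qlemmas

variable (Qf : InverseQuantalFrame Q)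

lemma mul_iSup_l {ι : Sort*} (f : ι → Q) (b : Q) :
    Qf.mul (⨆ i, f i) b = ⨆ i, Qf.mul (f i) b := by
  rw [iSup, Qf.sSup_mul, iSup_range]

lemma mul_iSup_r {ι : Sort*} (a : Q) (f : ι → Q) :
    Qf.mul a (⨆ i, f i) = ⨆ i, Qf.mul a (f i) := by
  rw [iSup, Qf.mul_sSup, iSup_range]

lemma star_iSup {ι : Sort*} (f : ι → Q) :
    Qf.star (⨆ i, f i) = ⨆ i, Qf.star (f i) := by
  rw [iSup, Qf.star_sSup, iSup_range]

lemma supp_iSup {ι : Sort*} (f : ι → Q) :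
    Qf.supp (⨆ i, f i) = ⨆ i, Qf.supp (f i) := by
  rw [iSup, Qf.supp_sSup, iSup_range]

lemma mul_sup_l (a b c : Q) : Qf.mul (a ⊔ b) c = Qf.mul a c ⊔ Qf.mul b c := by
  have h := Qf.sSup_mul {a, b} c
  rw [sSup_pair] at h
  rw [h, iSup_insert, iSup_singleton]

lemma mul_sup_r (a b c : Q) : Qf.mul a (b ⊔ c) = Qf.mul a b ⊔ Qf.mul a c := by
  have h := Qf.mul_sSup a {b, c}
  rw [sSup_pair] at h
  rw [h, iSup_insert, iSup_singleton]

lemma star_sup (a b : Q) : Qf.star (a ⊔ b) = Qf.star a ⊔ Qf.star b := by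
  have h := Qf.star_sSup {a, b}
  rw [sSup_pair] at h
  rw [h, iSup_insert, iSup_singleton]

lemma supp_sup (a b : Q) : Qf.supp (a ⊔ b) = Qf.supp a ⊔ Qf.supp b := by
  have h := Qf.supp_sSup {a, b}
  rw [sSup_pair] at h
  rw [h, iSup_insert, iSup_singleton]

lemma mul_mono {a b c d : Q} (h1 : a ≤ b) (h2 : c ≤ d) :
    Qf.mul a c ≤ Qf.mul b d := by
  have step1 : Qf.mul a c ≤ Qf.mul b c :=
    le_sup_left.trans (by rw [← mul_sup_l, sup_eq_right.mpr h1])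
  have step2 : Qf.mul b c ≤ Qf.mul b d :=
    le_sup_left.trans (by rw [← mul_sup_r, sup_eq_right.mpr h2])
  exact step1.trans step2

lemma star_mono {a b : Q} (h : a ≤ b) : Qf.star a ≤ Qf.star b :=
  le_sup_left.trans (by rw [← star_sup, sup_eq_right.mpr h])

lemma supp_mono {a b : Q} (h : a ≤ b) : Qf.supp a ≤ Qf.supp b :=
  le_sup_left.trans (by rw [← supp_sup, sup_eq_right.mpr h])

lemma star_e : Qf.star Qf.e = Qf.e := by
  have h : Qf.star (Qf.star Qf.e) = Qf.mul (Qf.star (Qf.star Qf.e)) (Qf.star Qf.e) := by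
    rw [← Qf.star_mul, Qf.e_mul]
  rw [Qf.star_star, Qf.e_mul] at h
  exact h.symm

lemma star_le_e {b : Q} (hb : b ≤ Qf.e) : Qf.star b ≤ Qf.e := by
  calc Qf.star b ≤ Qf.star Qf.e := star_mono Qf hb
    _ = Qf.e := star_e Qf

lemma supp_of_le_e {b : Q} (hb : b ≤ Qf.e) : Qf.supp b = b := by
  apply le_antisymm
  · calc Qf.supp b ≤ Qf.mul b (Qf.star b) := Qf.supp_le_mul_star b
      _ ≤ Qf.mul b Qf.e := mul_mono Qf le_rfl (star_le_e Qf hb)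
      _ = b := Qf.mul_e b
  · calc b ≤ Qf.mul (Qf.supp b) b := Qf.le_supp_mul b
      _ ≤ Qf.mul (Qf.supp b) Qf.e := mul_mono Qf le_rfl hb
      _ = Qf.supp b := Qf.mul_e _

lemma le_mul_star_of_le_e {b : Q} (hb : b ≤ Qf.e) : b ≤ Qf.mul b (Qf.star b) := by
  conv_lhs => rw [← supp_of_le_e Qf hb]
  exact Qf.supp_le_mul_star b

lemma star_of_le_e {b : Q} (hb : b ≤ Qf.e) : Qf.star b = b := by
  have key : ∀ c : Q, c ≤ Qf.e → c ≤ Qf.star c := by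
    intro c hc
    calc c ≤ Qf.mul c (Qf.star c) := le_mul_star_of_le_e Qf hc
      _ ≤ Qf.mul Qf.e (Qf.star c) := mul_mono Qf hc le_rfl
      _ = Qf.star c := Qf.e_mul _
  apply le_antisymm
  · calc Qf.star b ≤ Qf.star (Qf.star b) := key _ (star_le_e Qf hb)
      _ = b := Qf.star_star b
  · exact key b hb

lemma mul_self_of_le_e {b : Q} (hb : b ≤ Qf.e) : Qf.mul b b = b := by
  apply le_antisymm
  · calc Qf.mul b b ≤ Qf.mul b Qf.e := mul_mono Qf le_rfl hb
      _ = b := Qf.mul_e b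
  · calc b ≤ Qf.mul b (Qf.star b) := le_mul_star_of_le_e Qf hb
      _ = Qf.mul b b := by rw [star_of_le_e Qf hb]

lemma mul_eq_inf_of_le_e {b c : Q} (hb : b ≤ Qf.e) (hc : c ≤ Qf.e) :
    Qf.mul b c = b ⊓ c := by
  apply le_antisymm
  · exact le_inf (by calc Qf.mul b c ≤ Qf.mul b Qf.e := mul_mono Qf le_rfl hc
        _ = b := Qf.mul_e b)
      (by calc Qf.mul b c ≤ Qf.mul Qf.e c := mul_mono Qf hb le_rfl
        _ = c := Qf.e_mul c)
  · calc b ⊓ c = Qf.mul (b ⊓ c) (b ⊓ c) :=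
        (mul_self_of_le_e Qf (le_trans inf_le_left hb)).symm
      _ ≤ Qf.mul b c := mul_mono Qf inf_le_left inf_le_right

lemma supp_pu {v : Q} (hv : v ∈ Qf.toQuantale.PU) :
    Qf.supp v = Qf.mul v (Qf.star v) := by
  apply le_antisymm (Qf.supp_le_mul_star v)
  calc Qf.mul v (Qf.star v) ≤ Qf.mul (Qf.mul (Qf.supp v) v) (Qf.star v) :=
      mul_mono Qf (Qf.le_supp_mul v) le_rfl
    _ = Qf.mul (Qf.supp v) (Qf.mul v (Qf.star v)) := Qf.mul_assoc _ _ _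
    _ ≤ Qf.mul (Qf.supp v) Qf.e := mul_mono Qf le_rfl hv.1
    _ = Qf.supp v := Qf.mul_e _

lemma pu_mul_star_mul {v : Q} (hv : v ∈ Qf.toQuantale.PU) :
    Qf.mul v (Qf.mul (Qf.star v) v) = v := by
  apply le_antisymm
  · calc Qf.mul v (Qf.mul (Qf.star v) v) = Qf.mul (Qf.mul v (Qf.star v)) v :=
        (Qf.mul_assoc _ _ _).symm
      _ ≤ Qf.mul Qf.e v := mul_mono Qf hv.1 le_rfl
      _ = v := Qf.e_mul v
  · calc v ≤ Qf.mul (Qf.supp v) v := Qf.le_supp_mul v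
      _ = Qf.mul (Qf.mul v (Qf.star v)) v := by rw [supp_pu Qf hv]
      _ = Qf.mul v (Qf.mul (Qf.star v) v) := Qf.mul_assoc _ _ _

lemma pu_star {v : Q} (hv : v ∈ Qf.toQuantale.PU) :
    Qf.star v ∈ Qf.toQuantale.PU := by
  constructor
  · show Qf.mul (Qf.star v) (Qf.star (Qf.star v)) ≤ Qf.e
    rw [Qf.star_star]; exact hv.2
  · show Qf.mul (Qf.star (Qf.star v)) (Qf.star v) ≤ Qf.e
    rw [Qf.star_star]; exact hv.1

lemma pu_of_le {a v : Q} (hv : v ∈ Qf.toQuantale.PU) (h : a ≤ v) :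
    a ∈ Qf.toQuantale.PU := by
  constructor
  · calc Qf.mul a (Qf.star a) ≤ Qf.mul v (Qf.star v) :=
        mul_mono Qf h (star_mono Qf h)
      _ ≤ Qf.e := hv.1
  · calc Qf.mul (Qf.star a) a ≤ Qf.mul (Qf.star v) v :=
        mul_mono Qf (star_mono Qf h) h
      _ ≤ Qf.e := hv.2

lemma decomp (q : Q) :
    q ≤ sSup {v : Q | v ∈ Qf.toQuantale.PU ∧ v ≤ q} := by
  have htop : sSup (Qf.toQuantale.PU) = ⊤ := Qf.sSup_PU
  calc q = q ⊓ sSup (Qf.toQuantale.PU) := by rw [htop, inf_top_eq]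
    _ = ⨆ v ∈ Qf.toQuantale.PU, q ⊓ v := inf_sSup_eq
    _ ≤ sSup {v : Q | v ∈ Qf.toQuantale.PU ∧ v ≤ q} := by
        apply iSup₂_le
        intro v hv
        exact le_sSup ⟨pu_of_le Qf hv inf_le_right, inf_le_left⟩

lemma supp_mul_le (q r : Q) : Qf.supp (Qf.mul q r) ≤ Qf.supp q := by
  have h1 : Qf.mul q r ≤ Qf.mul (Qf.supp q) (Qf.mul q r) := by
    calc Qf.mul q r ≤ Qf.mul (Qf.mul (Qf.supp q) q) r :=
        mul_mono Qf (Qf.le_supp_mul q) le_rfl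
      _ = Qf.mul (Qf.supp q) (Qf.mul q r) := Qf.mul_assoc _ _ _
  calc Qf.supp (Qf.mul q r) ≤ Qf.supp (Qf.mul (Qf.supp q) (Qf.mul q r)) :=
      supp_mono Qf h1
    _ = Qf.mul (Qf.supp q) (Qf.supp (Qf.mul q r)) :=
      Qf.supp_stable _ _ (Qf.supp_le_e q)
    _ ≤ Qf.mul (Qf.supp q) Qf.e := mul_mono Qf le_rfl (Qf.supp_le_e _)
    _ = Qf.supp q := Qf.mul_e _

end Qlemmas

section Xlemmas

variable {Qf : InverseQuantalFrame Q} (H : QSheaf Qf X)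

lemma act_iSup_l {ι : Sort*} (f : ι → Q) (x : X) :
    H.act (⨆ i, f i) x = ⨆ i, H.act (f i) x := by
  rw [iSup, H.sSup_act, iSup_range]

lemma inner_iSup_l {ι : Sort*} (f : ι → X) (y : X) :
    H.inner (⨆ i, f i) y = ⨆ i, H.inner (f i) y := by
  rw [iSup, H.sSup_inner, iSup_range]

lemma act_sup_l (a b : Q) (x : X) : H.act (a ⊔ b) x = H.act a x ⊔ H.act b x := by
  have h := H.sSup_act {a, b} x
  rw [sSup_pair] at h
  rw [h, iSup_insert, iSup_singleton]

lemma act_sup_r (a : Q) (x y : X) : H.act a (x ⊔ y) = H.act a x ⊔ H.act a y := by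
  have h := H.act_sSup a {x, y}
  rw [sSup_pair] at h
  rw [h, iSup_insert, iSup_singleton]

lemma inner_sup_l (x y z : X) : H.inner (x ⊔ y) z = H.inner x z ⊔ H.inner y z := by
  have h := H.sSup_inner {x, y} z
  rw [sSup_pair] at h
  rw [h, iSup_insert, iSup_singleton]

lemma act_mono {a b : Q} {x y : X} (h1 : a ≤ b) (h2 : x ≤ y) :
    H.act a x ≤ H.act b y := by
  have step1 : H.act a x ≤ H.act b x :=
    le_sup_left.trans (by rw [← act_sup_l, sup_eq_right.mpr h1])
  have step2 : H.act b x ≤ H.act b y :=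
    le_sup_left.trans (by rw [← act_sup_r, sup_eq_right.mpr h2])
  exact step1.trans step2

lemma inner_mono_l {x y : X} (h : x ≤ y) (z : X) : H.inner x z ≤ H.inner y z :=
  le_sup_left.trans (by rw [← inner_sup_l, sup_eq_right.mpr h])

lemma act_le_of_le_e {b : Q} (hb : b ≤ Qf.e) (x : X) : H.act b x ≤ x := by
  calc H.act b x ≤ H.act Qf.e x := act_mono H hb le_rfl
    _ = x := H.act_e x

lemma inner_act_r (x : X) (a : Q) (y : X) :
    H.inner x (H.act a y) = Qf.mul (H.inner x y) (Qf.star a) := by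
  rw [H.inner_star x (H.act a y), H.inner_act, Qf.star_mul, ← H.inner_star]

lemma sppX_le_e (x : X) : H.sppX x ≤ Qf.e := inf_le_right

lemma sppX_act_le {a : Q} (ha : a ≤ Qf.e) (x : X) : H.sppX (H.act a x) ≤ a := by
  have hq : H.sppX (H.act a x) ≤ Qf.mul a (H.inner x (H.act a x)) := by
    calc H.sppX (H.act a x) ≤ H.inner (H.act a x) (H.act a x) := inf_le_left
      _ = Qf.mul a (H.inner x (H.act a x)) := H.inner_act _ _ _
  calc H.sppX (H.act a x) = Qf.supp (H.sppX (H.act a x)) :=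
      (supp_of_le_e Qf (sppX_le_e H _)).symm
    _ ≤ Qf.supp (Qf.mul a (H.inner x (H.act a x))) := supp_mono Qf hq
    _ = Qf.mul a (Qf.supp (H.inner x (H.act a x))) := Qf.supp_stable _ _ ha
    _ ≤ Qf.mul a Qf.e := mul_mono Qf le_rfl (Qf.supp_le_e _)
    _ = a := Qf.mul_e a

variable {S : Set X} (hS : ∀ x, x = ⨆ t ∈ S, H.act (H.inner x t) t)

include hS

lemma hilb_basis {w : X} (hw : w ∈ S) (x : X) : H.act (H.inner x w) w ≤ x := by
  conv_rhs => rw [hS x]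
  exact le_iSup₂ (f := fun t (_ : t ∈ S) => H.act (H.inner x t) t) w hw

lemma inner_decomp (x y : X) :
    H.inner x y = ⨆ w ∈ S, Qf.mul (H.inner x w) (H.inner w y) := by
  conv_lhs => rw [hS x]
  rw [inner_iSup_l]
  apply iSup_congr
  intro w
  rw [inner_iSup_l]
  apply iSup_congr
  intro _
  exact H.inner_act _ _ _

lemma supp_inner_le (x y : X) : Qf.supp (H.inner x y) ≤ H.sppX x := by
  rw [inner_decomp H hS x y, supp_iSup]
  apply iSup_le; intro w
  rw [supp_iSup]
  apply iSup_le; intro hw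
  have h1 : Qf.supp (H.inner x w) ≤ H.inner x x := by
    calc Qf.supp (H.inner x w) ≤ Qf.mul (H.inner x w) (Qf.star (H.inner x w)) :=
        Qf.supp_le_mul_star _
      _ = Qf.mul (H.inner x w) (H.inner w x) := by rw [← H.inner_star]
      _ = H.inner (H.act (H.inner x w) w) x := (H.inner_act _ _ _).symm
      _ ≤ H.inner x x := inner_mono_l H (hilb_basis H hS hw x) x
  calc Qf.supp (Qf.mul (H.inner x w) (H.inner w y)) ≤ Qf.supp (H.inner x w) :=
      supp_mul_le Qf _ _
    _ ≤ H.inner x x ⊓ Qf.e := le_inf h1 (Qf.supp_le_e _)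

/-- Key lemma: a local section pairs Hilbert-ly against basis elements. -/
lemma lemA {t : X} (ht : H.IsLocalSection t) {w : X} (hw : w ∈ S) :
    H.act (H.inner w t) t ≤ w := by
  have key : ∀ v ∈ Qf.toQuantale.PU, v ≤ H.inner w t → H.act v t ≤ w := by
    intro v hv hvq
    -- act (star v) w ≤ t
    have h1 : H.act (Qf.star v) w ≤ t := by
      have hst : Qf.star v ≤ H.inner t w := by
        calc Qf.star v ≤ Qf.star (H.inner w t) := star_mono Qf hvq
          _ = H.inner t w := (H.inner_star t w).symm
      calc H.act (Qf.star v) w ≤ H.act (H.inner t w) w := act_mono H hst le_rfl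
        _ ≤ t := hilb_basis H hS hw t
    set c := H.sppX (H.act (Qf.mul (Qf.star v) v) t) with hc_def
    have hvv : Qf.mul (Qf.star v) v ≤ Qf.e := hv.2
    have hc_le : c ≤ Qf.mul (Qf.star v) v := sppX_act_le H hvv t
    have hce : c ≤ Qf.e := sppX_le_e H _
    -- v c v* ≤ inner w w
    have h2 : Qf.mul (Qf.mul v c) (Qf.star v) ≤ H.inner w w := by
      calc Qf.mul (Qf.mul v c) (Qf.star v) ≤ Qf.mul (Qf.mul v Qf.e) (Qf.star v) :=
          mul_mono Qf (mul_mono Qf le_rfl hce) le_rfl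
        _ = Qf.mul v (Qf.star v) := by rw [Qf.mul_e]
        _ = Qf.supp v := (supp_pu Qf hv).symm
        _ ≤ Qf.supp (H.inner w t) := supp_mono Qf hvq
        _ ≤ H.sppX w := supp_inner_le H hS w t
        _ ≤ H.inner w w := inf_le_left
    -- c ≤ sppX (act (star v) w)
    have h3 : c ≤ H.sppX (H.act (Qf.star v) w) := by
      have hinner : H.inner (H.act (Qf.star v) w) (H.act (Qf.star v) w) =
          Qf.mul (Qf.star v) (Qf.mul (H.inner w w) v) := by
        rw [H.inner_act, inner_act_r, Qf.star_star]
      have hcc : c = Qf.mul (Qf.mul (Qf.star v) v) (Qf.mul c (Qf.mul (Qf.star v) v)) := by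
        rw [mul_eq_inf_of_le_e Qf hce hvv, inf_eq_left.mpr hc_le,
          mul_eq_inf_of_le_e Qf hvv hce, inf_eq_right.mpr hc_le]
      have hrw : Qf.mul (Qf.mul (Qf.star v) v) (Qf.mul c (Qf.mul (Qf.star v) v)) =
          Qf.mul (Qf.star v) (Qf.mul (Qf.mul (Qf.mul v c) (Qf.star v)) v) := by
        simp only [Qf.mul_assoc]
      refine le_inf ?_ hce
      rw [hinner, hcc, hrw]
      exact mul_mono Qf le_rfl (mul_mono Qf h2 le_rfl)
    -- conclude
    have h4 : H.act (Qf.mul (Qf.star v) v) t ≤ H.act (Qf.star v) w := by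
      have hloc1 : H.act c t = H.act (Qf.mul (Qf.star v) v) t :=
        ht _ (act_le_of_le_e H hvv t)
      have hloc2 : H.act (H.sppX (H.act (Qf.star v) w)) t = H.act (Qf.star v) w :=
        ht _ h1
      calc H.act (Qf.mul (Qf.star v) v) t = H.act c t := hloc1.symm
        _ ≤ H.act (H.sppX (H.act (Qf.star v) w)) t := act_mono H h3 le_rfl
        _ = H.act (Qf.star v) w := hloc2
    calc H.act v t = H.act (Qf.mul v (Qf.mul (Qf.star v) v)) t := by
          rw [pu_mul_star_mul Qf hv]
      _ = H.act v (H.act (Qf.mul (Qf.star v) v) t) := H.act_mul _ _ _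
      _ ≤ H.act v (H.act (Qf.star v) w) := act_mono H le_rfl h4
      _ = H.act (Qf.mul v (Qf.star v)) w := (H.act_mul _ _ _).symm
      _ ≤ w := act_le_of_le_e H hv.1 w
  calc H.act (H.inner w t) t
      ≤ H.act (sSup {v : Q | v ∈ Qf.toQuantale.PU ∧ v ≤ H.inner w t}) t :=
        act_mono H (decomp Qf _) le_rfl
    _ = ⨆ v ∈ {v : Q | v ∈ Qf.toQuantale.PU ∧ v ≤ H.inner w t}, H.act v t :=
        H.sSup_act _ t
    _ ≤ w := iSup₂_le fun v hv => key v hv.1 hv.2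

/-- Every local section is a Hilbert section. -/
lemma lemB {t : X} (ht : H.IsLocalSection t) (x : X) :
    H.act (H.inner x t) t ≤ x := by
  rw [inner_decomp H hS x t]
  rw [act_iSup_l]
  apply iSup_le; intro w
  rw [act_iSup_l]
  apply iSup_le; intro hw
  calc H.act (Qf.mul (H.inner x w) (H.inner w t)) t
      = H.act (H.inner x w) (H.act (H.inner w t) t) := H.act_mul _ _ _
    _ ≤ H.act (H.inner x w) w := act_mono H le_rfl (lemA H hS ht hw)
    _ ≤ x := hilb_basis H hS hw x

end Xlemmas

end Stmt12Aux

/-- If `s, t` are local sections and `u ∈ Q_I` with `⟨s,t⟩ = u`,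
`ς_X(s) = ς_Q(u)` and `ς_X(t) = ς_Q(u*)`, then `s` and `t` are principal
sections, `s = ut` and `t = u*s`. -/
theorem stmt12 {Q X : Type*} [Order.Frame Q] [Order.Frame X]
    (Qf : InverseQuantalFrame Q) (H : QSheaf Qf X)
    (s t : X) (u : Q)
    (hs : H.IsLocalSection s) (ht : H.IsLocalSection t)
    (hu : u ∈ Qf.toQuantale.PU)
    (h1 : H.inner s t = u)
    (h2 : H.sppX s = Qf.supp u)
    (h3 : H.sppX t = Qf.supp (Qf.star u)) :
    H.IsPrincipalSection s ∧ H.IsPrincipalSection t ∧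
    s = H.act u t ∧ t = H.act (Qf.star u) s := by
  obtain ⟨S, hS⟩ := H.hasBasis
  open Stmt12Aux in
  have hsupp_u : Qf.supp u = Qf.mul u (Qf.star u) := Stmt12Aux.supp_pu Qf hu
  have hu' : Qf.star u ∈ Qf.toQuantale.PU := Stmt12Aux.pu_star Qf hu
  have hsupp_u' : Qf.supp (Qf.star u) = Qf.mul (Qf.star u) u := by
    rw [Stmt12Aux.supp_pu Qf hu', Qf.star_star]
  have h_ts : H.inner t s = Qf.star u := by
    rw [H.inner_star t s, h1]
  -- u t ≤ s and u* s ≤ t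
  have h_ut_le : H.act u t ≤ s := by
    have := Stmt12Aux.lemB H hS ht s
    rwa [h1] at this
  have h_us_le : H.act (Qf.star u) s ≤ t := by
    have := Stmt12Aux.lemB H hS hs t
    rwa [h_ts] at this
  -- s = u t
  have hs_eq : s = H.act u t := by
    refine le_antisymm ?_ h_ut_le
    calc s = H.act (H.sppX s) s := (hs s le_rfl).symm
      _ = H.act (Qf.mul u (Qf.star u)) s := by rw [h2, hsupp_u]
      _ = H.act u (H.act (Qf.star u) s) := H.act_mul _ _ _
      _ ≤ H.act u t := Stmt12Aux.act_mono H le_rfl h_us_le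
  -- t = u* s
  have ht_eq : t = H.act (Qf.star u) s := by
    refine le_antisymm ?_ h_us_le
    calc t = H.act (H.sppX t) t := (ht t le_rfl).symm
      _ = H.act (Qf.mul (Qf.star u) u) t := by rw [h3, hsupp_u']
      _ = H.act (Qf.star u) (H.act u t) := H.act_mul _ _ _
      _ ≤ H.act (Qf.star u) s := Stmt12Aux.act_mono H le_rfl h_ut_le
  have hss : H.inner s s ≤ Qf.e := by
    calc H.inner s s = H.inner (H.act u t) s := by rw [← hs_eq]
      _ = Qf.mul u (H.inner t s) := H.inner_act _ _ _
      _ = Qf.mul u (Qf.star u) := by rw [h_ts]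
      _ ≤ Qf.e := hu.1
  have htt : H.inner t t ≤ Qf.e := by
    calc H.inner t t = H.inner (H.act (Qf.star u) s) t := by rw [← ht_eq]
      _ = Qf.mul (Qf.star u) (H.inner s t) := H.inner_act _ _ _
      _ = Qf.mul (Qf.star u) u := by rw [h1]
      _ ≤ Qf.e := hu.2
  exact ⟨⟨hs, hss⟩, ⟨ht, htt⟩, hs_eq, ht_eq⟩
end

section
/- Let Q be an inverse quantal frame, X a Q-sheaf, and 𝒮 ⊆ X a Hilbert basis. Then 𝒮 is principal (i.e., every s ∈ 𝒮 is a principal section) if and only if ⟨s,t⟩ ∈ Q_I for all s, t ∈ 𝒮. -/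
section Aux

variable {Q X : Type*} [Order.Frame Q] [Order.Frame X] {Qf : InverseQuantalFrame Q}
  (H : QSheaf Qf X)

lemma aux_act_mono_left {a b : Q} (h : a ≤ b) (x : X) : H.act a x ≤ H.act b x := by
  have hsup : H.act (a ⊔ b) x = H.act a x ⊔ H.act b x := by
    rw [← sSup_pair, H.sSup_act, iSup_pair]
  exact le_of_le_of_eq le_sup_left (by rw [← hsup, sup_eq_right.mpr h])

lemma aux_act_mono_right (a : Q) {x y : X} (h : x ≤ y) : H.act a x ≤ H.act a y := by
  have hsup : H.act a (x ⊔ y) = H.act a x ⊔ H.act a y := by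
    rw [← sSup_pair, H.act_sSup, iSup_pair]
  exact le_of_le_of_eq le_sup_left (by rw [← hsup, sup_eq_right.mpr h])

lemma aux_inner_mono_left {x y : X} (h : x ≤ y) (z : X) : H.inner x z ≤ H.inner y z := by
  have hsup : H.inner (x ⊔ y) z = H.inner x z ⊔ H.inner y z := by
    rw [← sSup_pair, H.sSup_inner, iSup_pair]
  exact le_of_le_of_eq le_sup_left (by rw [← hsup, sup_eq_right.mpr h])

lemma aux_star_mono {a b : Q} (h : a ≤ b) : Qf.star a ≤ Qf.star b := by
  have hsup : Qf.star (a ⊔ b) = Qf.star a ⊔ Qf.star b := by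
    rw [← sSup_pair, Qf.star_sSup, iSup_pair]
  exact le_of_le_of_eq le_sup_left (by rw [← hsup, sup_eq_right.mpr h])

lemma aux_inner_mono_right (x : X) {y z : X} (h : y ≤ z) : H.inner x y ≤ H.inner x z := by
  rw [H.inner_star x y, H.inner_star x z]
  exact aux_star_mono (aux_inner_mono_left H h x)

lemma aux_star_inner (x y : X) : Qf.star (H.inner x y) = H.inner y x :=
  (H.inner_star y x).symm

lemma aux_inner_biSup (S : Set X) (f : X → X) (y : X) :
    H.inner (⨆ t ∈ S, f t) y = ⨆ t ∈ S, H.inner (f t) y := by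
  rw [← sSup_image, H.sSup_inner, iSup_image]

/-- Basis elements are Hilbert sections. -/
lemma aux_basis_hilbert {S : Set X} (hS : H.IsHilbertBasis S) {t : X} (ht : t ∈ S) (x : X) :
    H.act (H.inner x t) t ≤ x := by
  conv_rhs => rw [hS x]
  exact le_biSup (fun t => H.act (H.inner x t) t) ht

lemma aux_le_act_sppX {S : Set X} (hS : H.IsHilbertBasis S) (x : X) :
    x ≤ H.act (H.sppX x) x := by
  conv_lhs => rw [hS x]
  refine iSup₂_le fun t ht => ?_
  have h1 : H.inner x t ≤ Qf.mul (Qf.supp (H.inner x t)) (H.inner x t) :=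
    Qf.le_supp_mul _
  have h2 : Qf.supp (H.inner x t) ≤ H.sppX x := by
    refine le_inf ?_ (Qf.supp_le_e _)
    calc Qf.supp (H.inner x t) ≤ Qf.mul (H.inner x t) (Qf.star (H.inner x t)) :=
          Qf.supp_le_mul_star _
      _ = H.inner (H.act (H.inner x t) t) x := by
          rw [aux_star_inner, H.inner_act]
      _ ≤ H.inner x x := aux_inner_mono_left H (aux_basis_hilbert H hS ht x) x
  calc H.act (H.inner x t) t
      ≤ H.act (Qf.mul (Qf.supp (H.inner x t)) (H.inner x t)) t :=
        aux_act_mono_left H h1 t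
    _ = H.act (Qf.supp (H.inner x t)) (H.act (H.inner x t) t) := H.act_mul _ _ _
    _ ≤ H.act (H.sppX x) (H.act (H.inner x t) t) := aux_act_mono_left H h2 _
    _ ≤ H.act (H.sppX x) x :=
        aux_act_mono_right H _ (aux_basis_hilbert H hS ht x)

/-- Basis elements are local sections. -/
lemma aux_basis_local {S : Set X} (hS : H.IsHilbertBasis S) {s : X} (hs : s ∈ S) :
    H.IsLocalSection s := by
  intro x hx
  refine le_antisymm ?_ ?_
  · have h1 : H.sppX x ≤ H.inner x s :=
      le_trans inf_le_left (aux_inner_mono_right H x hx)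
    exact le_trans (aux_act_mono_left H h1 s) (aux_basis_hilbert H hS hs x)
  · exact le_trans (aux_le_act_sppX H hS x) (aux_act_mono_right H _ hx)

end Aux

/-- A Hilbert basis of a `Q`-sheaf is principal iff all inner
products of its elements are partial units. -/
theorem stmt13 {Q X : Type*} [Order.Frame Q] [Order.Frame X]
    (Qf : InverseQuantalFrame Q) (H : QSheaf Qf X)
    (S : Set X) (hS : H.IsHilbertBasis S) :
    (∀ s ∈ S, H.IsPrincipalSection s) ↔
    (∀ s ∈ S, ∀ t ∈ S, H.inner s t ∈ Qf.toQuantale.PU) := by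
  constructor
  · intro hP s hs t ht
    constructor
    · calc Qf.mul (H.inner s t) (Qf.star (H.inner s t))
          = H.inner (H.act (H.inner s t) t) s := by rw [aux_star_inner, H.inner_act]
        _ ≤ H.inner s s := aux_inner_mono_left H (aux_basis_hilbert H hS ht s) s
        _ ≤ Qf.e := (hP s hs).2
    · calc Qf.mul (Qf.star (H.inner s t)) (H.inner s t)
          = H.inner (H.act (H.inner t s) s) t := by rw [aux_star_inner, H.inner_act]
        _ ≤ H.inner t t := aux_inner_mono_left H (aux_basis_hilbert H hS hs t) t
        _ ≤ Qf.e := (hP t ht).2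
  · intro hPU s hs
    refine ⟨aux_basis_local H hS hs, ?_⟩
    have : H.inner s s = ⨆ t ∈ S, Qf.mul (H.inner s t) (Qf.star (H.inner s t)) := by
      nth_rewrite 1 [hS s]
      rw [aux_inner_biSup]
      refine iSup_congr fun t => iSup_congr fun ht => ?_
      rw [H.inner_act, aux_star_inner]
    rw [this]
    exact iSup₂_le fun t ht => (hPU s hs t ht).1
end
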